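/- In a local Moufang set with fixed non-equivalent points 0, ∞ and fixed μ-map τ, for every unit x we have μ_{xτ} = τ^{-1} μ_{-x} τ (i.e., μ_{xτ} is the conjugate of μ_{-x} by τ). -/

import Mathlib

open Equiv

structure LocalMoufangSet (X : Type*) where
  r : X → X → Prop
  requiv : Equivalence r
  U : X → Subgroup (Equiv.Perm X)
  preserves : ∀ x : X, ∀ u ∈ U x, ∀ a b : X, r a b ↔ r (u a) (u b)
  big : ∃ a b c : X, ¬ r a b ∧ ¬ r b c ∧ ¬ r a c
  lm1 : ∀ x y : X, r x y → ∀ u ∈ U x, ∃ v ∈ U y, ∀ z : X, r (u z) (v z)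
  lm2_fix : ∀ x : X, ∀ u ∈ U x, u x = x
  lm2_trans : ∀ x y z : X, ¬ r y x → ¬ r z x → ∃! u : Equiv.Perm X, u ∈ U x ∧ u y = z
  lm2'_trans : ∀ x y z : X, ¬ r y x → ¬ r z x → ∃ u ∈ U x, r (u y) z
  lm2'_free : ∀ x : X, ∀ u ∈ U x, ∀ y : X, ¬ r y x → r (u y) y → ∀ z : X, r (u z) z
  lm3 : ∀ x : X, ∀ g ∈ (⨆ y : X, U y : Subgroup (Equiv.Perm X)),
      (U x).map (MulAut.conj g).toMonoidHom = U (g x)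

namespace LocalMoufangSet

variable {X : Type*} (M : LocalMoufangSet X)

/-- The little projective group. -/
def G : Subgroup (Equiv.Perm X) := ⨆ x : X, M.U x

/-- `x` is a unit with respect to the base points `o` (zero) and `ι` (infinity). -/
def IsUnitPt (o ι x : X) : Prop := ¬ M.r x o ∧ ¬ M.r x ι

/-- `μ` is the μ-map of `x`: it lies in the double coset `U_0 α_x U_0` and swaps `o` and `ι`.
(We use the left-action convention: a right product `g α h` corresponds to `h * α * g`.) -/
def IsMuMap (o ι x : X) (μ : Equiv.Perm X) : Prop :=
  μ o = ι ∧ μ ι = o ∧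
    ∃ a ∈ M.U ι, a o = x ∧ ∃ g ∈ M.U o, ∃ h ∈ M.U o, μ = h * a * g

/-- Specialness with respect to a μ-map `τ`: `(-x)τ = -(xτ)` for all units `x`. -/
def Special (o ι : X) (τ : Equiv.Perm X) : Prop :=
  ∀ z : X, IsUnitPt M o ι z → ∀ a ∈ M.U ι, a o = z → ∀ b ∈ M.U ι, b o = τ z →
    τ (a⁻¹ o) = b⁻¹ o

end LocalMoufangSet

namespace LocalMoufangSet

variable {X : Type*} (M : LocalMoufangSet X)

lemma mem_G' {x : X} {u : Equiv.Perm X} (h : u ∈ M.U x) : u ∈ M.G :=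
  (le_iSup M.U x) h

lemma preserves_G {g : Equiv.Perm X} (hg : g ∈ M.G) (a b : X) :
    M.r a b ↔ M.r (g a) (g b) := by
  revert a b
  refine Subgroup.iSup_induction (C := fun g => ∀ a b, M.r a b ↔ M.r (g a) (g b)) M.U hg
    (fun x u hu => M.preserves x u hu) (by simp) ?_
  intro u v hu hv a b
  rw [hv a b, hu (v a) (v b)]
  simp [Equiv.Perm.mul_apply]

lemma conj_mem' {x : X} {g u : Equiv.Perm X} (hg : g ∈ M.G) (hu : u ∈ M.U x) :
    g * u * g⁻¹ ∈ M.U (g x) := by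
  rw [← M.lm3 x g hg]
  exact Subgroup.mem_map.mpr ⟨u, hu, by simp⟩

/-- Uniqueness of μ-maps. -/
lemma mu_unique {o ι y : X} (h0 : ¬ M.r o ι) (hyo : ¬ M.r y o) (hyι : ¬ M.r y ι)
    {μ μ' : Equiv.Perm X} (h1 : M.IsMuMap o ι y μ) (h2 : M.IsMuMap o ι y μ') :
    μ = μ' := by
  obtain ⟨ho1, hi1, a, haU, hao, g, hgU, h, hhU, hd⟩ := h1
  obtain ⟨ho2, hi2, a', haU', hao', g', hgU', h', hhU', hd'⟩ := h2
  have hιo : ¬ M.r ι o := fun hc => h0 (M.requiv.symm hc)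
  -- the middle terms agree
  have haa : a = a' := by
    obtain ⟨u, _, huniq⟩ := M.lm2_trans ι o y h0 hyι
    rw [huniq a ⟨haU, hao⟩, huniq a' ⟨haU', hao'⟩]
  -- the left terms agree (they map y to ι)
  have hhy : h y = ι := by
    rw [hd] at ho1
    simpa [Equiv.Perm.mul_apply, M.lm2_fix o g hgU, hao] using ho1
  have hhy' : h' y = ι := by
    rw [hd'] at ho2
    simpa [Equiv.Perm.mul_apply, M.lm2_fix o g' hgU', hao'] using ho2
  have hhh : h = h' := by
    obtain ⟨u, _, huniq⟩ := M.lm2_trans o y ι hyo hιo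
    rw [huniq h ⟨hhU, hhy⟩, huniq h' ⟨hhU', hhy'⟩]
  -- the right terms agree (they map ι to a⁻¹ o)
  have key : ∀ b : Equiv.Perm X, b ∈ M.U ι → ∀ k : Equiv.Perm X, k ∈ M.U o →
      ∀ m : Equiv.Perm X, m ∈ M.U o → (m * b * k) ι = o → k ι = b⁻¹ o := by
    intro b hb k hk m hm hval
    have h2' : b (k ι) = o := m.injective (by
      rw [M.lm2_fix o m hm]
      simpa [Equiv.Perm.mul_apply] using hval)
    rw [← h2', Equiv.Perm.inv_def, Equiv.symm_apply_apply]
  have hgι : g ι = a⁻¹ o := by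
    apply key a haU g hgU h hhU
    rw [← hd]; exact hi1
  have hgι' : g' ι = a⁻¹ o := by
    rw [haa]
    apply key a' haU' g' hgU' h' hhU'
    rw [← hd']; exact hi2
  have hnao : ¬ M.r (a⁻¹ o) o := by
    intro hcon
    have := (M.preserves ι a haU (a⁻¹ o) o).mp hcon
    rw [Equiv.Perm.inv_def, Equiv.apply_symm_apply, hao] at this
    exact hyo (M.requiv.symm this)
  have hgg : g = g' := by
    obtain ⟨u, _, huniq⟩ := M.lm2_trans o ι (a⁻¹ o) hιo hnao
    rw [huniq g ⟨hgU, hgι⟩, huniq g' ⟨hgU', hgι'⟩]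
  rw [hd, hd', haa, hhh, hgg]

end LocalMoufangSet


/-- `μ_{xτ} = μ_{-x}^τ`.  In the left-action convention the
conjugate `τ⁻¹ μ_{-x} τ` (right convention) becomes `τ * μ_{-x} * τ⁻¹`. -/
theorem stmt5 {X : Type*} (M : LocalMoufangSet X) (o ι : X) (h0 : ¬ M.r o ι)
    (e : X) (he : M.IsUnitPt o ι e)
    (τ : Equiv.Perm X) (hτ : M.IsMuMap o ι e τ)
    (x : X) (hx : M.IsUnitPt o ι x)
    (α : Equiv.Perm X) (hαU : α ∈ M.U ι) (hαo : α o = x)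
    (μxt μnx : Equiv.Perm X)
    (hμxt : M.IsMuMap o ι (τ x) μxt)
    (hμnx : M.IsMuMap o ι (α⁻¹ o) μnx) :
    μxt = τ * μnx * τ⁻¹ := by
  obtain ⟨hτo, hτι, ta, htaU, htao, tg, htgU, th, hthU, hτd⟩ := hτ
  obtain ⟨hno, hni, a, haU, hao, g, hgU, h, hhU, hd⟩ := hμnx
  have hτG : τ ∈ M.G := by
    rw [hτd]
    exact mul_mem (mul_mem (M.mem_G' hthU) (M.mem_G' htaU)) (M.mem_G' htgU)
  have hμG : μnx ∈ M.G := by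
    rw [hd]
    exact mul_mem (mul_mem (M.mem_G' hhU) (M.mem_G' haU)) (M.mem_G' hgU)
  set ν : Equiv.Perm X := τ * μnx * τ⁻¹ with hν
  have hνG : ν ∈ M.G := mul_mem (mul_mem hτG hμG) (inv_mem hτG)
  -- τ⁻¹ values
  have hτinvo : τ⁻¹ o = ι := by rw [← hτι, Equiv.Perm.inv_def, Equiv.symm_apply_apply]
  have hτinvι : τ⁻¹ ι = o := by rw [← hτo, Equiv.Perm.inv_def, Equiv.symm_apply_apply]
  -- ν swaps o and ι
  have hνo : ν o = ι := by
    simp only [hν, Equiv.Perm.mul_apply, hτinvo, hni, hτo]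
  have hνι : ν ι = o := by
    simp only [hν, Equiv.Perm.mul_apply, hτinvι, hno, hτι]
  -- a = α⁻¹
  have hnxι : ¬ M.r (α⁻¹ o) ι := by
    intro hcon
    have := (M.preserves ι α hαU (α⁻¹ o) ι).mp hcon
    rw [Equiv.Perm.inv_def, Equiv.apply_symm_apply, M.lm2_fix ι α hαU] at this
    exact h0 this
  have haα : a = α⁻¹ := by
    obtain ⟨u, _, huniq⟩ := M.lm2_trans ι o (α⁻¹ o) h0 hnxι
    rw [huniq a ⟨haU, hao⟩, huniq α⁻¹ ⟨inv_mem hαU, rfl⟩]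
  -- g ι = x
  have hgι : g ι = x := by
    rw [hd] at hni
    have h2' : a (g ι) = o := h.injective (by
      rw [M.lm2_fix o h hhU]
      simpa [Equiv.Perm.mul_apply] using hni)
    have : g ι = a⁻¹ o := by rw [← h2', Equiv.Perm.inv_def, Equiv.symm_apply_apply]
    rw [this, haα, inv_inv, hαo]
  -- the conjugated factors
  have hAmem : τ * h * τ⁻¹ ∈ M.U ι := by
    have := M.conj_mem' hτG hhU
    rwa [hτo] at this
  have hBmem : τ * a * τ⁻¹ ∈ M.U o := by
    have := M.conj_mem' hτG haU
    rwa [hτι] at this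
  have hCmem : τ * g * τ⁻¹ ∈ M.U ι := by
    have := M.conj_mem' hτG hgU
    rwa [hτo] at this
  have hCo : (τ * g * τ⁻¹) o = τ x := by
    simp only [Equiv.Perm.mul_apply, hτinvo, hgι]
  have hνinvι : ν⁻¹ ι = o := by rw [← hνo, Equiv.Perm.inv_def, Equiv.symm_apply_apply]
  have hg''mem : ν⁻¹ * (τ * h * τ⁻¹) * ν ∈ M.U o := by
    have := M.conj_mem' (inv_mem hνG) hAmem
    rwa [hνinvι, inv_inv] at this
  -- the decomposition of ν
  have hdecomp : ν = (τ * a * τ⁻¹) * (τ * g * τ⁻¹) * (ν⁻¹ * (τ * h * τ⁻¹) * ν) := by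
    have hν' : ν = (τ * h * τ⁻¹) * (τ * a * τ⁻¹) * (τ * g * τ⁻¹) := by
      rw [hν, hd]; group
    rw [hν']
    group
  have hνMu : M.IsMuMap o ι (τ x) ν :=
    ⟨hνo, hνι, τ * g * τ⁻¹, hCmem, hCo, ν⁻¹ * (τ * h * τ⁻¹) * ν, hg''mem,
      τ * a * τ⁻¹, hBmem, hdecomp⟩
  -- τ x is a unit
  have hτxo : ¬ M.r (τ x) o := by
    intro hcon
    rw [← hτι] at hcon
    exact hx.2 ((M.preserves_G hτG x ι).mpr hcon)
  have hτxι : ¬ M.r (τ x) ι := by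
    intro hcon
    rw [← hτo] at hcon
    exact hx.1 ((M.preserves_G hτG x o).mpr hcon)
  exact M.mu_unique h0 hτxo hτxι hμxt hνMu
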